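/- Let q be a prime power and n ≥ 2. Then p(GL_n(F_q)) ≤ ((q^n - 1)/(q - 1)) · Π_{p prime, p ∣ gcd(n, q-1)} p^{v_p(q-1)} + Σ_{p prime, p ∣ q-1, p ∤ n} p^{v_p(q-1)}. -/

import Mathlib

open Matrix Equiv
set_option linter.unusedSectionVars false

/-- The minimal degree of a faithful permutation representation of `G`:
the least `m` such that `G` embeds into the symmetric group on `m` letters. -/
noncomputable def minPermDeg (G : Type*) [Group G] : ℕ :=
  sInf {m : ℕ | ∃ f : G →* Equiv.Perm (Fin m), Function.Injective f}

lemma minPermDeg_le {G X : Type*} [Group G] [Finite X]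
    (f : G →* Equiv.Perm X) (hf : Function.Injective f) :
    minPermDeg G ≤ Nat.card X := by
  apply Nat.sInf_le
  exact ⟨(Equiv.Perm.viaEmbeddingHom (Finite.equivFin X).toEmbedding).comp f,
    (Equiv.Perm.viaEmbeddingHom_injective _).comp hf⟩

-- scalar matrix lemma
lemma scalar_of_eigen {F : Type} [Field F] {n : ℕ} (hn : 2 ≤ n)
    (M : Matrix (Fin n) (Fin n) F)
    (h : ∀ v : Fin n → F, v ≠ 0 → ∃ c : F, M.mulVec v = c • v) :
    ∃ c : F, M = c • (1 : Matrix (Fin n) (Fin n) F) := by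
  have hsingle : ∀ i : Fin n, (Pi.single i 1 : Fin n → F) ≠ 0 := by
    intro i hc
    have := congrFun hc i
    simp at this
  choose c hc using fun i => h (Pi.single i 1) (hsingle i)
  -- columns : M.mulVec (Pi.single i 1) j = M j i
  have hcol : ∀ i j, M j i = c i * (Pi.single i 1 : Fin n → F) j := by
    intro i j
    have := congrFun (hc i) j
    simpa [Matrix.mulVec_single] using this
  -- all c i equal
  have hceq : ∀ i j : Fin n, c i = c j := by
    intro i j
    rcases eq_or_ne i j with rfl | hij
    · rfl
    have hv : (Pi.single i 1 + Pi.single j 1 : Fin n → F) ≠ 0 := by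
      intro hz
      have := congrFun hz i
      simp [Pi.single_apply, hij] at this
    obtain ⟨d, hd⟩ := h _ hv
    rw [Matrix.mulVec_add] at hd
    have hi := congrFun hd i
    have hj := congrFun hd j
    simp [Pi.single_apply, hij, Ne.symm hij, hcol i i, hcol j i, hcol i j, hcol j j] at hi hj
    rw [hi, hj]
  refine ⟨c ⟨0, by omega⟩, ?_⟩
  ext j i
  rw [Matrix.smul_apply, hcol i j, hceq i ⟨0, by omega⟩]
  simp [Pi.single_apply, Matrix.one_apply]

lemma card_rootsOfUnity_of_dvd {F : Type} [Field F] [Fintype F] [DecidableEq F] {d : ℕ} [NeZero d]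
    (hd : d ∣ Fintype.card F - 1) : Nat.card (rootsOfUnity d F) = d := by
  obtain ⟨g, hg⟩ := IsCyclic.exists_generator (α := Fˣ)
  have hord : orderOf g = Fintype.card F - 1 := by
    rw [orderOf_eq_card_of_forall_mem_zpowers hg, Nat.card_eq_fintype_card, Fintype.card_units]
  set m := Fintype.card F - 1 with hm
  have hm0 : m ≠ 0 := by
    have := orderOf_pos g
    omega
  have hζ : orderOf (g ^ (m / d)) = d := by
    rw [orderOf_pow, hord, Nat.gcd_eq_right (Nat.div_dvd_of_dvd hd), Nat.div_div_self hd hm0]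
  have hprim : IsPrimitiveRoot (g ^ (m / d)) d := by
    have h := IsPrimitiveRoot.orderOf (g ^ (m / d))
    rwa [hζ] at h
  exact hprim.card_rootsOfUnity'

-- number theory kernel lemma
lemma eq_one_of_pows {G : Type*} [Group G] (x : G) (mm n : ℕ) (hm : mm ≠ 0)
    (hC : x ^ (∏ p ∈ mm.primeFactors.filter (fun p => ¬ p ∣ n), p ^ mm.factorization p) = 1)
    (h2 : ∀ p ∈ mm.primeFactors.filter (fun p => ¬ p ∣ n),
      x ^ (n * (mm / p ^ mm.factorization p)) = 1) :
    x = 1 := by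
  set P := mm.primeFactors.filter (fun p => ¬ p ∣ n) with hP
  by_contra hx
  have hd : orderOf x ≠ 1 := by simpa [orderOf_eq_one_iff] using hx
  obtain ⟨r, hr, hrd⟩ := Nat.exists_prime_and_dvd hd
  have hdvdC : orderOf x ∣ ∏ p ∈ P, p ^ mm.factorization p := orderOf_dvd_of_pow_eq_one hC
  have hrC : r ∣ ∏ p ∈ P, p ^ mm.factorization p := hrd.trans hdvdC
  obtain ⟨p, hpP, hrp⟩ := (Prime.dvd_finset_prod_iff hr.prime _).mp hrC
  have hp : p.Prime := (Nat.mem_primeFactors.mp (Finset.mem_filter.mp hpP).1).1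
  have hrp' : r = p := (Nat.prime_dvd_prime_iff_eq hr hp).mp (hr.dvd_of_dvd_pow hrp)
  rw [← hrp'] at hpP
  have hkey := orderOf_dvd_of_pow_eq_one (h2 r hpP)
  have hrn : ¬ r ∣ n := (Finset.mem_filter.mp hpP).2
  have : r ∣ n * (mm / r ^ mm.factorization r) := hrd.trans hkey
  rcases (Nat.Prime.dvd_mul hr).mp this with h | h
  · exact hrn h
  · exact Nat.not_dvd_ordCompl hr hm h

lemma AC_eq (n m : ℕ) (hn : n ≠ 0) (hm : m ≠ 0) :
    (∏ p ∈ (Nat.gcd n m).primeFactors, p ^ m.factorization p) *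
    (∏ p ∈ m.primeFactors.filter (fun p => ¬ p ∣ n), p ^ m.factorization p) = m := by
  have hset : (Nat.gcd n m).primeFactors = m.primeFactors.filter (fun p => p ∣ n) := by
    ext p
    simp only [Nat.primeFactors_gcd hn hm, Finset.mem_inter, Finset.mem_filter,
      Nat.mem_primeFactors]
    tauto
  rw [hset, Finset.prod_filter_mul_prod_filter_not]
  have := Nat.factorization_prod_pow_eq_self hm
  rwa [Finsupp.prod, Nat.support_factorization] at this

section Construction

variable {F : Type} [Field F] [Fintype F] [DecidableEq F] {n : ℕ}

/-- nonzero vectors -/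
abbrev Vnz (F : Type) [Field F] (n : ℕ) := {v : Fin n → F // v ≠ 0}

instance vnzScalarAction (S : Subgroup Fˣ) : MulAction S (Vnz F n) where
  smul s v := ⟨((s : Fˣ) : F) • v.1, smul_ne_zero (Units.ne_zero _) v.2⟩
  one_smul v := Subtype.ext (by
    show (((1 : S) : Fˣ) : F) • v.1 = v.1
    simp)
  mul_smul s t v := Subtype.ext (by
    show (((s * t : S) : Fˣ) : F) • v.1 = ((s : Fˣ) : F) • ((t : Fˣ) : F) • v.1
    rw [← mul_smul]
    norm_cast)

lemma vnz_smul_def (S : Subgroup Fˣ) (s : S) (v : Vnz F n) :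
    (s • v).1 = ((s : Fˣ) : F) • v.1 := rfl

instance glAction : MulAction (GL (Fin n) F) (Vnz F n) where
  smul g v := ⟨(g : Matrix (Fin n) (Fin n) F).mulVec v.1, by
    intro h
    apply v.2
    have h1 : ((g⁻¹ : GL (Fin n) F) : Matrix (Fin n) (Fin n) F) * (g : Matrix (Fin n) (Fin n) F)
        = 1 := by
      rw [← Units.val_mul, inv_mul_cancel g, Units.val_one]
    have h2 := congrArg (fun w => ((g⁻¹ : GL (Fin n) F) : Matrix (Fin n) (Fin n) F).mulVec w) h
    simp only [Matrix.mulVec_mulVec, h1, Matrix.one_mulVec, Matrix.mulVec_zero] at h2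
    exact h2⟩
  one_smul v := Subtype.ext (by
    show ((1 : GL (Fin n) F) : Matrix (Fin n) (Fin n) F).mulVec v.1 = v.1
    rw [Units.val_one, Matrix.one_mulVec])
  mul_smul g h v := Subtype.ext (by
    show ((g * h : GL (Fin n) F) : Matrix (Fin n) (Fin n) F).mulVec v.1
      = (g : Matrix (Fin n) (Fin n) F).mulVec ((h : Matrix (Fin n) (Fin n) F).mulVec v.1)
    rw [Units.val_mul, Matrix.mulVec_mulVec])

lemma gl_smul_def (g : GL (Fin n) F) (v : Vnz F n) :
    (g • v).1 = (g : Matrix (Fin n) (Fin n) F).mulVec v.1 := rfl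

lemma gl_scalar_smul_comm (S : Subgroup Fˣ) (g : GL (Fin n) F) (s : S) (v : Vnz F n) :
    g • (s • v) = s • (g • v) := by
  apply Subtype.ext
  rw [gl_smul_def, vnz_smul_def, vnz_smul_def, gl_smul_def, Matrix.mulVec_smul]

instance glQAction (S : Subgroup Fˣ) :
    MulAction (GL (Fin n) F) (MulAction.orbitRel.Quotient S (Vnz F n)) where
  smul g := Quotient.map' (fun v => g • v) (by
    intro a b h
    rw [MulAction.orbitRel_apply, MulAction.mem_orbit_iff] at h ⊢
    obtain ⟨s, hs⟩ := h
    exact ⟨s, by rw [← gl_scalar_smul_comm, hs]⟩)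
  one_smul x := by
    induction x using Quotient.inductionOn' with
    | h v => show Quotient.map' _ _ _ = _; rw [Quotient.map'_mk'']; simp
  mul_smul g h x := by
    induction x using Quotient.inductionOn' with
    | h v =>
      show Quotient.map' _ _ _ = Quotient.map' _ _ (Quotient.map' _ _ _)
      rw [Quotient.map'_mk'', Quotient.map'_mk'', Quotient.map'_mk'', mul_smul]

lemma glQ_smul_mk (S : Subgroup Fˣ) (g : GL (Fin n) F) (v : Vnz F n) :
    g • (Quotient.mk'' v : MulAction.orbitRel.Quotient S (Vnz F n)) = Quotient.mk'' (g • v) :=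
  Quotient.map'_mk'' _ _ _

end Construction

theorem stmt_9 (q n : ℕ) (hq : IsPrimePow q) (hn : 2 ≤ n)
    (F : Type) [Field F] [Fintype F] [DecidableEq F] (hF : Fintype.card F = q) :
    minPermDeg (GL (Fin n) F) ≤
      ((q ^ n - 1) / (q - 1)) *
        ∏ p ∈ (Nat.gcd n (q - 1)).primeFactors, p ^ (q - 1).factorization p +
      ∑ p ∈ (q - 1).primeFactors.filter (fun p => ¬ p ∣ n),
        p ^ (q - 1).factorization p := by
  have hq2 : 2 ≤ q := hq.two_le
  set m := q - 1 with hmdef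
  have hm0 : m ≠ 0 := by omega
  have hcardU : Fintype.card Fˣ = m := by rw [Fintype.card_units, hF]
  set P := m.primeFactors.filter (fun p => ¬ p ∣ n) with hPdef
  set A := ∏ p ∈ (Nat.gcd n m).primeFactors, p ^ m.factorization p with hAdef
  set C := ∏ p ∈ P, p ^ m.factorization p with hCdef
  have hAC : A * C = m := AC_eq n m (by omega) hm0
  have hCdvd : C ∣ m := Dvd.intro_left A hAC
  have hC0 : C ≠ 0 := fun h => hm0 (by rw [← hAC, h, mul_zero])
  haveI : NeZero C := ⟨hC0⟩
  set S : Subgroup Fˣ := rootsOfUnity C F with hSdef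
  have hcardS : Nat.card S = C := card_rootsOfUnity_of_dvd (by rw [hF]; exact hCdvd)
  set V := Vnz F n with hVdef
  set Q := MulAction.orbitRel.Quotient S V with hQdef
  haveI : Finite V := Subtype.finite
  haveI : Finite Q := Quotient.finite _
  set ι := {p : ℕ // p ∈ P} with hιdef
  set β : ι → Type := fun p => ↥(rootsOfUnity (p.1 ^ m.factorization p.1) F) with hβdef
  haveI : ∀ p : ι, Finite (β p) := fun p => Subtype.finite
  have hppow_dvd : ∀ p : ι, p.1 ^ m.factorization p.1 ∣ m := fun p => Nat.ordProj_dvd m p.1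
  set fp : ∀ p : ι, Fˣ →* Equiv.Perm (β p) := fun p =>
    (MulAction.toPermHom (β p) (β p)).comp
      ((powMonoidHom (m / p.1 ^ m.factorization p.1)).codRestrict
        (rootsOfUnity (p.1 ^ m.factorization p.1) F)
        (fun x => by
          rw [mem_rootsOfUnity, powMonoidHom_apply, ← pow_mul,
            Nat.div_mul_cancel (hppow_dvd p), ← hcardU, pow_card_eq_one])) with hfpdef
  set π1 : GL (Fin n) F →* Equiv.Perm Q := MulAction.toPermHom _ _ with hπ1def
  set π2 : GL (Fin n) F →* Equiv.Perm (Σ p : ι, β p) :=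
    ((Equiv.Perm.sigmaCongrRightHom β).comp (Pi.monoidHom fp)).comp
      Matrix.GeneralLinearGroup.det with hπ2def
  set Φ : GL (Fin n) F →* Equiv.Perm (Q ⊕ Σ p : ι, β p) :=
    (Equiv.Perm.sumCongrHom _ _).comp (π1.prod π2) with hΦdef
  -- kernel triviality
  have hker : ∀ g : GL (Fin n) F, π1 g = 1 → π2 g = 1 → g = 1 := by
    intro g h1 h2
    have heig : ∀ v : V, ∃ s : S, s • v = g • v := by
      intro v
      have hq1 : (Quotient.mk'' (g • v) : Q) = Quotient.mk'' v := by
        have h := congrArg (fun σ : Equiv.Perm Q => σ (Quotient.mk'' v)) h1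
        simp only [Equiv.Perm.coe_one, id_eq] at h
        rw [← glQ_smul_mk S g v]
        exact h
      rw [Quotient.eq'', MulAction.orbitRel_apply, MulAction.mem_orbit_iff] at hq1
      exact hq1
    have hmat : ∃ c : F, (g : Matrix (Fin n) (Fin n) F) = c • 1 := by
      apply scalar_of_eigen hn
      intro w hw
      obtain ⟨s, hs⟩ := heig ⟨w, hw⟩
      refine ⟨((s : Fˣ) : F), ?_⟩
      have h := congrArg Subtype.val hs
      rw [vnz_smul_def, gl_smul_def] at h
      exact h.symm
    obtain ⟨c, hc⟩ := hmat
    have hz : (Pi.single (⟨0, by omega⟩ : Fin n) (1:F) : Fin n → F) ≠ 0 := by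
      intro hz
      have := congrFun hz ⟨0, by omega⟩
      simp at this
    set v0 : V := ⟨Pi.single ⟨0, by omega⟩ 1, hz⟩ with hv0def
    obtain ⟨s0, hs0⟩ := heig v0
    have hceq : c = ((s0 : Fˣ) : F) := by
      have h := congrArg Subtype.val hs0
      rw [vnz_smul_def, gl_smul_def, hc, Matrix.smul_mulVec, Matrix.one_mulVec] at h
      have h0 := congrFun h ⟨0, by omega⟩
      simp only [Pi.smul_apply, smul_eq_mul, hv0def, Pi.single_eq_same, mul_one] at h0
      exact h0.symm
    have hdet : Matrix.GeneralLinearGroup.det g = (s0 : Fˣ) ^ n := by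
      apply Units.ext
      show (g : Matrix (Fin n) (Fin n) F).det = (((s0 : Fˣ) ^ n : Fˣ) : F)
      rw [hc, Matrix.det_smul, Matrix.det_one, mul_one, Fintype.card_fin, hceq,
        Units.val_pow_eq_pow_val]
    have hpow : ∀ p : ι, ((s0 : Fˣ)) ^ (n * (m / p.1 ^ m.factorization p.1)) = 1 := by
      intro p
      have hpi : Pi.monoidHom fp (Matrix.GeneralLinearGroup.det g) = 1 := by
        apply Equiv.Perm.sigmaCongrRightHom_injective
        rw [_root_.map_one]
        exact h2
      have hfp1 : fp p (Matrix.GeneralLinearGroup.det g) = 1 := congrFun hpi p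
      -- evaluate the permutation at 1
      have hy := congrArg (fun σ : Equiv.Perm (β p) => σ 1) hfp1
      simp only [Equiv.Perm.coe_one, id_eq] at hy
      -- hy : y • 1 = 1 where y is the codRestrict element
      have hy2 : ((Matrix.GeneralLinearGroup.det g) ^
            (m / p.1 ^ m.factorization p.1) : Fˣ) = 1 := by
        have hy3 := hy
        rw [hfpdef] at hy3
        simp only [MonoidHom.comp_apply, MulAction.toPermHom_apply, MulAction.toPerm_apply,
          smul_eq_mul, mul_one] at hy3
        have := congrArg (Subtype.val) hy3
        simpa [MonoidHom.codRestrict, powMonoidHom_apply] using this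
      rw [hdet, ← pow_mul] at hy2
      exact hy2
    have hlamC : ((s0 : Fˣ)) ^ C = 1 := (mem_rootsOfUnity C _).mp s0.2
    have hs01 : (s0 : Fˣ) = 1 := by
      refine eq_one_of_pows _ m n hm0 hlamC ?_
      intro p hp
      exact hpow ⟨p, hp⟩
    have hc1 : c = 1 := by rw [hceq, hs01, Units.val_one]
    apply Units.ext
    rw [hc, hc1, one_smul, Units.val_one]
  have hΦinj : Function.Injective Φ := by
    have hprodinj : Function.Injective (π1.prod π2) := by
      rw [injective_iff_map_eq_one]
      intro g hg
      rw [MonoidHom.prod_apply, Prod.mk_eq_one] at hg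
      exact hker g hg.1 hg.2
    rw [hΦdef, MonoidHom.coe_comp]
    exact (Equiv.Perm.sumCongrHom_injective).comp hprodinj
  have hbound := minPermDeg_le Φ hΦinj
  rw [Nat.card_sum] at hbound
  -- cardinality of Q
  have hstab : ∀ v : V, MulAction.stabilizer S v = ⊥ := by
    intro v
    ext s
    simp only [MulAction.mem_stabilizer_iff, Subgroup.mem_bot]
    constructor
    · intro hs
      obtain ⟨i, hi⟩ := Function.ne_iff.mp v.2
      have h := congrFun (congrArg Subtype.val hs) i
      rw [vnz_smul_def] at h
      simp only [Pi.smul_apply, smul_eq_mul] at h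
      have hs1 : ((s : Fˣ) : F) = 1 := by
        rcases (mul_left_eq_self₀).mp h with h' | h'
        · exact h'
        · exact absurd h' hi
      have : (s : Fˣ) = 1 := Units.ext (by rw [hs1, Units.val_one])
      exact_mod_cast this
    · rintro rfl
      exact one_smul _ _
  have horb : Nat.card V = Nat.card Q * C := by
    have e := MulAction.selfEquivSigmaOrbitsQuotientStabilizer S V
    have e2 : ∀ ω : Q, (S ⧸ MulAction.stabilizer S (ω.out)) ≃ S := fun ω =>
      ((QuotientGroup.quotientMulEquivOfEq (hstab ω.out)).trans
        QuotientGroup.quotientBot).toEquiv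
    have e3 : V ≃ Q × S := e.trans ((Equiv.sigmaCongrRight e2).trans (Equiv.sigmaEquivProd Q S))
    rw [Nat.card_congr e3, Nat.card_prod, hcardS]
  have hVcard : Nat.card V = q ^ n - 1 := by
    have hv : Nat.card {v : Fin n → F // ¬ (v = 0)} = q ^ n - 1 := by
      rw [Nat.card_eq_fintype_card, Fintype.card_subtype_compl, Fintype.card_subtype_eq,
        Fintype.card_fun, Fintype.card_fin, hF]
    exact hv
  have hdvd_qn : m ∣ q ^ n - 1 := by
    have := Nat.sub_dvd_pow_sub_pow q 1 n
    simpa using this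
  have hQcard : Nat.card Q = ((q ^ n - 1) / m) * A := by
    have hKm : ((q ^ n - 1) / m) * m = q ^ n - 1 := Nat.div_mul_cancel hdvd_qn
    have h1 : Nat.card Q * C = (((q ^ n - 1) / m) * A) * C := by
      rw [← horb, hVcard, mul_assoc, hAC, hKm]
    exact Nat.eq_of_mul_eq_mul_right (Nat.pos_of_ne_zero hC0) h1
  -- cardinality of the sigma type
  have hSigma : Nat.card (Σ p : ι, β p) = ∑ p ∈ P, p ^ m.factorization p := by
    letI : ∀ p : ι, Fintype (β p) := fun p => Fintype.ofFinite _
    rw [Nat.card_eq_fintype_card, Fintype.card_sigma]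
    have hterm : ∀ p : ι, Fintype.card (β p) = p.1 ^ m.factorization p.1 := by
      intro p
      have hp : p.1.Prime := (Nat.mem_primeFactors.mp (Finset.mem_filter.mp p.2).1).1
      haveI : NeZero (p.1 ^ m.factorization p.1) := ⟨pow_ne_zero _ hp.ne_zero⟩
      rw [← Nat.card_eq_fintype_card]
      exact card_rootsOfUnity_of_dvd (by rw [hF]; exact hppow_dvd p)
    calc ∑ p : ι, Fintype.card (β p) = ∑ p : ι, p.1 ^ m.factorization p.1 :=
          Finset.sum_congr rfl (fun p _ => hterm p)
      _ = ∑ p ∈ P, p ^ m.factorization p := by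
        exact Finset.sum_coe_sort P (fun p => p ^ m.factorization p)
  calc minPermDeg (GL (Fin n) F) ≤ Nat.card Q + Nat.card (Σ p : ι, β p) := hbound
    _ = ((q ^ n - 1) / m) * A + ∑ p ∈ P, p ^ m.factorization p := by rw [hQcard, hSigma]
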